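/- arXiv:1904.02870 — 2 statements merged into one kernel-verified Lean document; each statement's English description precedes it below -/
import Mathlib

section
/- (Maurey-type matrix covering bound.) Let (p, q) and (r, s) be pairs of conjugate exponents (1/p + 1/q = 1 and 1/r + 1/s = 1) with p ≤ 2, let a, b, ε > 0 be reals and m a positive integer. Let X ∈ ℝ^{n×d} satisfy ‖X‖_p ≤ b, where ‖X‖_p is the entrywise ℓ_p norm. Consider the family H_A = { X·A : A ∈ ℝ^{d×m}, ‖A‖_{q,s} ≤ a }, where ‖A‖_{q,s} is the (q,s) group norm. Then there exists a finite set T ⊆ ℝ^{n×m} with log |T| ≤ ⌈a²·b²·m^{2/r} / ε²⌉ · log(2·d·m) such that every element of H_A is within Frobenius distance ε of some element of T; that is, the ε-covering number of H_A in the norm ‖·‖_F satisfies log N(H_A, ε, ‖·‖_F) ≤ ⌈a²b²m^{2/r}/ε²⌉ · log(2dm). -/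
open Finset

/-- The Frobenius norm of a real matrix. -/
noncomputable def frobNorm {m n : ℕ} (M : Matrix (Fin m) (Fin n) ℝ) : ℝ :=
  Real.sqrt (∑ i, ∑ j, (M i j) ^ 2)

/-- The entrywise `ℓ_p` norm of a real matrix: `(Σ_{i,j} |X_{ij}|^p)^{1/p}`. -/
noncomputable def entryLpNorm (p : ℝ) {m n : ℕ} (X : Matrix (Fin m) (Fin n) ℝ) : ℝ :=
  (∑ i, ∑ j, |X i j| ^ p) ^ (1 / p)

/-- The `(q,s)` group norm of a real matrix: the `ℓ_s` norm of the vector of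
`ℓ_q` norms of its columns. -/
noncomputable def groupNorm (q s : ℝ) {d m : ℕ} (A : Matrix (Fin d) (Fin m) ℝ) : ℝ :=
  (∑ j, ((∑ i, |A i j| ^ q) ^ (1 / q)) ^ s) ^ (1 / s)


lemma exists_le_expect {ι : Type*} [Fintype ι] (P g : ι → ℝ)
    (hP : ∀ i, 0 ≤ P i) (h1 : ∑ i, P i = 1) :
    ∃ i, g i ≤ ∑ i, P i * g i := by
  by_contra hcon
  push_neg at hcon
  obtain ⟨i0, hi0⟩ : ∃ i, 0 < P i := by
    by_contra h
    push_neg at h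
    have : ∑ i, P i = 0 := Finset.sum_eq_zero fun i _ => le_antisymm (h i) (hP i)
    rw [this] at h1; norm_num at h1
  have hlt : ∑ i, P i * (∑ j, P j * g j) < ∑ i, P i * g i := by
    apply Finset.sum_lt_sum
    · exact fun i _ => mul_le_mul_of_nonneg_left (hcon i).le (hP i)
    · exact ⟨i0, Finset.mem_univ i0, mul_lt_mul_of_pos_left (hcon i0) hi0⟩
  rw [← Finset.sum_mul, h1, one_mul] at hlt
  exact lt_irrefl _ hlt

lemma le_of_sq_le_sq' {x y : ℝ} (hx : 0 ≤ x) (hy : 0 ≤ y) (h : x ^ 2 ≤ y ^ 2) : x ≤ y := by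
  rw [← Real.sqrt_sq hx, ← Real.sqrt_sq hy]
  exact Real.sqrt_le_sqrt h

lemma lp_mono {ι : Type*} [Fintype ι] (x : ι → ℝ) (hx : ∀ i, 0 ≤ x i) {p : ℝ}
    (hp : 0 < p) (hp2 : p ≤ 2) :
    Real.sqrt (∑ i, x i ^ 2) ≤ (∑ i, x i ^ p) ^ (1 / p) := by
  set t := (∑ i, x i ^ p) ^ (1 / p) with ht
  have hsum0 : 0 ≤ ∑ i, x i ^ p := sum_nonneg fun i _ => Real.rpow_nonneg (hx i) p
  have ht0 : 0 ≤ t := Real.rpow_nonneg hsum0 _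
  have htp : t ^ p = ∑ i, x i ^ p := by
    rw [ht, ← Real.rpow_mul hsum0, one_div, inv_mul_cancel₀ hp.ne', Real.rpow_one]
  have hxle : ∀ i, x i ≤ t := by
    intro i
    have h1 : x i ^ p ≤ t ^ p := by
      rw [htp]
      exact Finset.single_le_sum (fun i _ => Real.rpow_nonneg (hx i) p) (mem_univ i)
    exact (Real.rpow_le_rpow_iff (hx i) ht0 hp).mp h1
  have key : ∑ i, x i ^ 2 ≤ t ^ 2 := by
    rcases eq_or_lt_of_le ht0 with h0 | htpos
    · have hx0 : ∀ i, x i = 0 := fun i => le_antisymm (h0 ▸ hxle i) (hx i)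
      simp only [hx0]
      simp
      positivity
    · have step : ∀ i, x i ^ 2 ≤ t ^ (2 - p) * x i ^ p := by
        intro i
        rcases eq_or_lt_of_le (hx i) with h0 | hxpos
        · rw [← h0]
          rw [Real.zero_rpow hp.ne']
          simp
        · have e1 : x i ^ (2:ℝ) = x i ^ (2 - p) * x i ^ p := by
            rw [← Real.rpow_add hxpos]; ring_nf
          have e2 : x i ^ (2:ℕ) = x i ^ (2:ℝ) := by
            rw [← Real.rpow_natCast (x i) 2]; norm_num
          rw [e2, e1]
          apply mul_le_mul_of_nonneg_right _ (Real.rpow_nonneg (hx i) p)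
          exact Real.rpow_le_rpow (hx i) (hxle i) (by linarith)
      calc ∑ i, x i ^ 2 ≤ ∑ i, t ^ (2 - p) * x i ^ p := Finset.sum_le_sum fun i _ => step i
        _ = t ^ (2 - p) * t ^ p := by rw [← Finset.mul_sum, htp]
        _ = t ^ (2:ℝ) := by rw [← Real.rpow_add htpos]; ring_nf
        _ = t ^ (2:ℕ) := by rw [← Real.rpow_natCast t 2]; norm_num
  calc Real.sqrt (∑ i, x i ^ 2) ≤ Real.sqrt (t ^ 2) := Real.sqrt_le_sqrt key
    _ = t := Real.sqrt_sq ht0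

lemma euclid_sum_apply {ι κ : Type*} [Fintype κ] (s : Finset ι)
    (f : ι → EuclideanSpace ℝ κ) (x : κ) :
    (∑ i ∈ s, f i) x = ∑ i ∈ s, f i x := by
  exact map_sum (PiLp.projₗ 2 (𝕜 := ℝ) (fun _ : κ => ℝ) x) f s

lemma maurey {E : Type*} [NormedAddCommGroup E] [InnerProductSpace ℝ E]
    {ι : Type*} [Fintype ι] (V : ι → E) (P : ι → ℝ)
    (hP : ∀ i, 0 ≤ P i) (h1 : ∑ i, P i = 1) {C : ℝ}
    (hC : ∀ i, ‖V i‖ ≤ C) (k : ℕ) :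
    ∃ f : Fin k → ι, ‖(∑ t, V (f t)) - (k : ℝ) • (∑ i, P i • V i)‖ ^ 2 ≤ k * C ^ 2 := by
  induction k with
  | zero => exact ⟨Fin.elim0, by simp⟩
  | succ k ih =>
    obtain ⟨f, hf⟩ := ih
    set M : E := ∑ i, P i • V i with hM
    set S : E := ∑ t, V (f t) with hS
    set u : E := S - (k:ℝ) • M with hu
    have hmean : ∑ x, P x • (V x - M) = 0 := by
      simp only [smul_sub, Finset.sum_sub_distrib, ← Finset.sum_smul, h1, one_smul, ← hM,
        sub_self]
    have hVsq : ∀ x, ‖V x‖ ^ 2 ≤ C ^ 2 := fun x => by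
      have := hC x
      nlinarith [norm_nonneg (V x)]
    have h2 : ∑ x, P x * inner ℝ u (V x - M) = (0:ℝ) := by
      have : ∑ x, P x * inner ℝ u (V x - M) = inner ℝ u (∑ x, P x • (V x - M)) := by
        rw [inner_sum]
        exact Finset.sum_congr rfl fun x _ => (real_inner_smul_right u _ (P x)).symm
      rw [this, hmean, inner_zero_right]
    have h3 : ∑ x, P x * ‖V x - M‖ ^ 2 ≤ C ^ 2 := by
      have hinner : ∑ x, P x * inner ℝ (V x) M = (‖M‖:ℝ) ^ 2 := by
        have : ∑ x, P x * inner ℝ (V x) M = inner ℝ (∑ x, P x • V x) M := by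
          rw [sum_inner]
          exact Finset.sum_congr rfl fun x _ => (real_inner_smul_left (V x) M (P x)).symm
        rw [this, ← hM, real_inner_self_eq_norm_sq]
      have expand : ∀ x, ‖V x - M‖ ^ 2 = ‖V x‖ ^ 2 - 2 * inner ℝ (V x) M + ‖M‖ ^ 2 :=
        fun x => norm_sub_sq_real _ _
      calc ∑ x, P x * ‖V x - M‖ ^ 2
          = ∑ x, (P x * ‖V x‖ ^ 2 - 2 * (P x * inner ℝ (V x) M) + P x * ‖M‖ ^ 2) := by
            refine Finset.sum_congr rfl fun x _ => ?_
            rw [expand x]; ring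
        _ = (∑ x, P x * ‖V x‖ ^ 2) - 2 * (∑ x, P x * inner ℝ (V x) M)
              + (∑ x, P x) * ‖M‖ ^ 2 := by
            rw [Finset.sum_add_distrib, Finset.sum_sub_distrib, ← Finset.mul_sum,
              ← Finset.sum_mul]
        _ = (∑ x, P x * ‖V x‖ ^ 2) - 2 * ‖M‖ ^ 2 + ‖M‖ ^ 2 := by rw [hinner, h1, one_mul]
        _ ≤ (∑ x, P x * C ^ 2) - 2 * ‖M‖ ^ 2 + ‖M‖ ^ 2 := by
            have : ∑ x, P x * ‖V x‖ ^ 2 ≤ ∑ x, P x * C ^ 2 :=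
              Finset.sum_le_sum fun x _ => mul_le_mul_of_nonneg_left (hVsq x) (hP x)
            linarith
        _ = C ^ 2 - ‖M‖ ^ 2 := by rw [← Finset.sum_mul, h1, one_mul]; ring
        _ ≤ C ^ 2 := by nlinarith [norm_nonneg M, sq_nonneg ‖M‖]
    obtain ⟨x, hx⟩ := exists_le_expect P (fun x => ‖u + (V x - M)‖ ^ 2) hP h1
    have havg : ∑ y, P y * ‖u + (V y - M)‖ ^ 2 ≤ (k+1) * C ^ 2 := by
      have expand : ∀ y, ‖u + (V y - M)‖ ^ 2
          = ‖u‖ ^ 2 + 2 * inner ℝ u (V y - M) + ‖V y - M‖ ^ 2 := fun y => norm_add_sq_real _ _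
      calc ∑ y, P y * ‖u + (V y - M)‖ ^ 2
          = ∑ y, (P y * ‖u‖ ^ 2 + 2 * (P y * inner ℝ u (V y - M)) + P y * ‖V y - M‖ ^ 2) := by
            refine Finset.sum_congr rfl fun y _ => ?_
            rw [expand y]; ring
        _ = (∑ y, P y) * ‖u‖ ^ 2 + 2 * (∑ y, P y * inner ℝ u (V y - M))
              + ∑ y, P y * ‖V y - M‖ ^ 2 := by
            rw [Finset.sum_add_distrib, Finset.sum_add_distrib, ← Finset.sum_mul,
              ← Finset.mul_sum]
        _ = ‖u‖ ^ 2 + ∑ y, P y * ‖V y - M‖ ^ 2 := by rw [h1, h2, one_mul]; ring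
        _ ≤ (k : ℝ) * C ^ 2 + C ^ 2 := add_le_add hf h3
        _ = (k+1) * C ^ 2 := by ring
    refine ⟨(Fin.cons (α := fun _ => ι) x f), ?_⟩
    have hsum : ∑ t : Fin (k+1), V (Fin.cons (α := fun _ => ι) x f t) = V x + S := by
      rw [Fin.sum_univ_succ]
      simp [hS]
    rw [hsum]
    have harr : V x + S - ((k+1 : ℕ) : ℝ) • M = u + (V x - M) := by
      push_cast
      rw [add_smul, one_smul, hu]
      abel
    rw [harr]
    calc ‖u + (V x - M)‖ ^ 2 ≤ (k+1) * C ^ 2 := le_trans hx havg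
      _ = ((k+1 : ℕ) : ℝ) * C ^ 2 := by push_cast; ring

lemma holder_chain {n d m : ℕ}
    (p q r s : ℝ) (hp : 1 < p) (hq : 1 < q) (hr : 1 < r) (hs : 1 < s)
    (hpq : 1 / p + 1 / q = 1) (hrs : 1 / r + 1 / s = 1) (hp2 : p ≤ 2)
    (a b : ℝ) (ha : 0 < a) (hb : 0 < b)
    (X : Matrix (Fin n) (Fin d) ℝ) (hX : entryLpNorm p X ≤ b)
    (A : Matrix (Fin d) (Fin m) ℝ) (hA : groupNorm q s A ≤ a) :
    ∑ j, ∑ i, |A i j| * Real.sqrt (∑ k', X k' i ^ 2) ≤ a * b * (m:ℝ) ^ (1/r) := by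
  have hp0 : 0 < p := lt_trans one_pos hp
  set np : Fin d → ℝ := fun i => (∑ k', |X k' i| ^ p) ^ (1/p) with hnp
  have hnp0 : ∀ i, 0 ≤ np i :=
    fun i => Real.rpow_nonneg (sum_nonneg fun _ _ => Real.rpow_nonneg (abs_nonneg _) _) _
  have hcnnp : ∀ i, Real.sqrt (∑ k', X k' i ^ 2) ≤ np i := by
    intro i
    have := lp_mono (fun k' => |X k' i|) (fun k' => abs_nonneg _) hp0 hp2
    simpa [np, sq_abs, one_div] using this
  set α : Fin m → ℝ := fun j => (∑ i, |A i j| ^ q) ^ (1/q) with hα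
  have hα0 : ∀ j, 0 ≤ α j :=
    fun j => Real.rpow_nonneg (sum_nonneg fun _ _ => Real.rpow_nonneg (abs_nonneg _) _) _
  have hqp : Real.HolderConjugate q p :=
    Real.holderConjugate_iff.mpr ⟨hq, by rw [← one_div, ← one_div]; linarith⟩
  have hrs' : Real.HolderConjugate r s :=
    Real.holderConjugate_iff.mpr ⟨hr, by rw [← one_div, ← one_div]; linarith⟩
  have hnpsum : (∑ i, np i ^ p) ^ (1/p) ≤ b := by
    have hnppow : ∀ i, np i ^ p = ∑ k', |X k' i| ^ p := by
      intro i
      rw [hnp, ← Real.rpow_mul (sum_nonneg fun _ _ => Real.rpow_nonneg (abs_nonneg _) _),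
        one_div, inv_mul_cancel₀ hp0.ne', Real.rpow_one]
    calc (∑ i, np i ^ p) ^ (1/p) = (∑ i, ∑ k', |X k' i| ^ p) ^ (1/p) := by
          rw [Finset.sum_congr rfl fun i _ => hnppow i]
      _ = (∑ k', ∑ i, |X k' i| ^ p) ^ (1/p) := by rw [Finset.sum_comm]
      _ ≤ b := hX
  have step1 : ∀ j, ∑ i, |A i j| * Real.sqrt (∑ k', X k' i ^ 2) ≤ α j * b := by
    intro j
    calc ∑ i, |A i j| * Real.sqrt (∑ k', X k' i ^ 2)
        ≤ ∑ i, |A i j| * np i :=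
          Finset.sum_le_sum fun i _ => mul_le_mul_of_nonneg_left (hcnnp i) (abs_nonneg _)
      _ ≤ (∑ i, |A i j| ^ q) ^ (1/q) * (∑ i, np i ^ p) ^ (1/p) :=
          Real.inner_le_Lp_mul_Lq_of_nonneg univ hqp (fun i _ => abs_nonneg _)
            (fun i _ => hnp0 i)
      _ ≤ α j * b := mul_le_mul_of_nonneg_left hnpsum (hα0 j)
  have step2 : ∑ j, α j ≤ (m:ℝ) ^ (1/r) * a := by
    have hh := Real.inner_le_Lp_mul_Lq_of_nonneg (f := fun _ : Fin m => (1:ℝ)) (g := α)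
      univ hrs' (fun i _ => zero_le_one) (fun i _ => hα0 i)
    simp only [one_mul, Real.one_rpow, Finset.sum_const, Finset.card_univ, Fintype.card_fin,
      nsmul_eq_mul, mul_one] at hh
    calc ∑ j, α j ≤ ((m:ℝ)) ^ (1/r) * (∑ j, α j ^ s) ^ (1/s) := hh
      _ ≤ (m:ℝ) ^ (1/r) * a := by
          apply mul_le_mul_of_nonneg_left _ (Real.rpow_nonneg (Nat.cast_nonneg m) _)
          exact hA
  calc ∑ j, ∑ i, |A i j| * Real.sqrt (∑ k', X k' i ^ 2)
      ≤ ∑ j, α j * b := Finset.sum_le_sum fun j _ => step1 j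
    _ = (∑ j, α j) * b := by rw [Finset.sum_mul]
    _ ≤ ((m:ℝ) ^ (1/r) * a) * b := mul_le_mul_of_nonneg_right step2 hb.le
    _ = a * b * (m:ℝ) ^ (1/r) := by ring

set_option maxHeartbeats 1000000 in
/-- (Maurey-type matrix covering bound.) Let `(p,q)` and `(r,s)` be
conjugate exponents with `p ≤ 2`, `a, b, ε > 0`, and `X` a real `n × d` matrix with
entrywise `ℓ_p` norm at most `b`. Then the class `{X·A : ‖A‖_{q,s} ≤ a}` admits an
`ε`-cover `T` (in Frobenius distance) with
`log |T| ≤ ⌈a²b²m^{2/r}/ε²⌉·log(2dm)`. -/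
theorem maurey_matrix_covering_bound {n d m : ℕ} (hn : 0 < n) (hd : 0 < d) (hm : 0 < m)
    (p q r s : ℝ) (hp : 1 < p) (hq : 1 < q) (hr : 1 < r) (hs : 1 < s)
    (hpq : 1 / p + 1 / q = 1) (hrs : 1 / r + 1 / s = 1) (hp2 : p ≤ 2)
    (a b ε : ℝ) (ha : 0 < a) (hb : 0 < b) (hε : 0 < ε)
    (X : Matrix (Fin n) (Fin d) ℝ) (hX : entryLpNorm p X ≤ b) :
    ∃ T : Finset (Matrix (Fin n) (Fin m) ℝ),
      Real.log T.card ≤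
        (⌈a ^ 2 * b ^ 2 * (m : ℝ) ^ (2 / r) / ε ^ 2⌉ : ℝ) * Real.log (2 * d * m) ∧
      ∀ A : Matrix (Fin d) (Fin m) ℝ, groupNorm q s A ≤ a →
        ∃ Y ∈ T, frobNorm (X * A - Y) ≤ ε := by
  classical
  have hm0 : (0:ℝ) < m := by exact_mod_cast hm
  set C : ℝ := a * b * (m:ℝ) ^ (1/r) with hCdef
  have hC0 : 0 < C := by
    have : (0:ℝ) < (m:ℝ) ^ (1/r) := Real.rpow_pos_of_pos hm0 _
    positivity
  have hC2 : C ^ 2 = a ^ 2 * b ^ 2 * (m:ℝ) ^ (2/r) := by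
    have h2r : (m:ℝ) ^ (2/r) = ((m:ℝ) ^ (1/r)) ^ (2:ℕ) := by
      rw [← Real.rpow_natCast ((m:ℝ) ^ (1/r)) 2, ← Real.rpow_mul hm0.le]
      congr 1
      push_cast
      ring
    rw [h2r, hCdef]; ring
  set k0 : ℤ := ⌈C ^ 2 / ε ^ 2⌉ with hk0def
  have hk0pos : 0 < k0 := Int.ceil_pos.2 (by positivity)
  set k : ℕ := k0.toNat with hkdef
  have hkcast : (k:ℝ) = (k0:ℝ) := by exact_mod_cast Int.toNat_of_nonneg hk0pos.le
  have hkge : C ^ 2 / ε ^ 2 ≤ (k:ℝ) := by rw [hkcast]; exact Int.le_ceil _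
  have hkpos : (0:ℝ) < k := by rw [hkcast]; exact_mod_cast hk0pos
  -- column norms of X
  set cn : Fin d → ℝ := fun i => Real.sqrt (∑ k', (X k' i) ^ 2) with hcn
  have hcn0 : ∀ i, 0 ≤ cn i := fun i => Real.sqrt_nonneg _
  have hcnzero : ∀ i, cn i = 0 → ∀ k', X k' i = 0 := by
    intro i h0 k'
    have hsum : ∑ k', (X k' i) ^ 2 = 0 := by
      have h1 := Real.sqrt_eq_zero'.mp h0
      have h2 : 0 ≤ ∑ k', (X k' i) ^ 2 := sum_nonneg fun _ _ => sq_nonneg _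
      linarith
    have := (Finset.sum_eq_zero_iff_of_nonneg (fun _ _ => sq_nonneg _)).mp hsum k'
      (mem_univ k')
    exact (pow_eq_zero_iff two_ne_zero).mp this
  have hcnmul : ∀ i k', cn i * (X k' i / cn i) = X k' i := by
    intro i k'
    rcases eq_or_ne (cn i) 0 with h | h
    · rw [h, hcnzero i h k']; simp
    · field_simp
  have hcnsq : ∀ i, cn i ^ 2 = ∑ k', (X k' i) ^ 2 :=
    fun i => Real.sq_sqrt (sum_nonneg fun _ _ => sq_nonneg _)
  -- the building-block vectors
  set vec : Bool × Fin d × Fin m → EuclideanSpace ℝ (Fin n × Fin m) := fun z =>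
    (WithLp.equiv 2 _).symm (fun kl =>
      (if z.1 then (1:ℝ) else -1) * (C * (if kl.2 = z.2.2 then X kl.1 z.2.1 / cn z.2.1 else 0)))
    with hvecdef
  have hvec_apply : ∀ z kl, vec z kl =
      (if z.1 then (1:ℝ) else -1) * (C * (if kl.2 = z.2.2 then X kl.1 z.2.1 / cn z.2.1 else 0)) :=
    fun z kl => rfl
  have hvecnorm : ∀ z, ‖vec z‖ ≤ C := by
    intro z
    rw [EuclideanSpace.norm_eq]
    have hb1 : ∑ kl : Fin n × Fin m, ‖vec z kl‖ ^ 2 ≤ C ^ 2 := by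
      have hterm : ∀ kl : Fin n × Fin m, ‖vec z kl‖ ^ 2
          = C ^ 2 * (if kl.2 = z.2.2 then (X kl.1 z.2.1 / cn z.2.1) ^ 2 else 0) := by
        intro kl
        rw [Real.norm_eq_abs, sq_abs, hvec_apply]
        rcases z.1 <;> split_ifs <;> ring
      calc ∑ kl : Fin n × Fin m, ‖vec z kl‖ ^ 2
          = ∑ k' : Fin n, ∑ l : Fin m,
              C ^ 2 * (if l = z.2.2 then (X k' z.2.1 / cn z.2.1) ^ 2 else 0) := by
            rw [Fintype.sum_prod_type]
            exact Finset.sum_congr rfl fun k' _ => Finset.sum_congr rfl fun l _ => hterm (k', l)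
        _ = ∑ k' : Fin n, C ^ 2 * (X k' z.2.1 / cn z.2.1) ^ 2 := by
            refine Finset.sum_congr rfl fun k' _ => ?_
            rw [← Finset.mul_sum, Finset.sum_ite_eq' univ z.2.2
              (fun _ => (X k' z.2.1 / cn z.2.1) ^ 2)]
            simp
        _ = C ^ 2 * ((∑ k', (X k' z.2.1) ^ 2) / cn z.2.1 ^ 2) := by
            rw [← Finset.mul_sum]
            congr 1
            rw [Finset.sum_div]
            exact Finset.sum_congr rfl fun k' _ => div_pow _ _ _
        _ ≤ C ^ 2 := by
            rcases eq_or_ne (cn z.2.1) 0 with h | h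
            · have hz : ∀ k', X k' z.2.1 = 0 := hcnzero _ h
              simp [hz]
              positivity
            · rw [← hcnsq, div_self (by positivity), mul_one]

    calc Real.sqrt (∑ kl : Fin n × Fin m, ‖vec z kl‖ ^ 2) ≤ Real.sqrt (C ^ 2) :=
        Real.sqrt_le_sqrt hb1
      _ = C := Real.sqrt_sq hC0.le
  -- the cover
  set T : Finset (Matrix (Fin n) (Fin m) ℝ) :=
    Finset.image (fun f : Fin k → Bool × Fin d × Fin m =>
      Matrix.of fun k' l => (k:ℝ)⁻¹ * ((∑ t, vec (f t)) (k', l))) Finset.univ with hTdef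
  refine ⟨T, ?_, ?_⟩
  · -- cardinality bound
    have hcard : T.card ≤ (2 * d * m) ^ k := by
      calc T.card ≤ (Finset.univ : Finset (Fin k → Bool × Fin d × Fin m)).card :=
          Finset.card_image_le
        _ = (2 * d * m) ^ k := by
          rw [Finset.card_univ]
          simp [Fintype.card_fun, mul_assoc]
    have hTpos : 0 < T.card := by
      rw [hTdef]
      apply Finset.card_pos.2
      refine ⟨_, Finset.mem_image.2 ⟨fun _ => (true, ⟨0, hd⟩, ⟨0, hm⟩), mem_univ _, rfl⟩⟩
    have hlog : Real.log T.card ≤ Real.log ((2 * d * m : ℕ) ^ k) := by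
      apply Real.log_le_log (by exact_mod_cast hTpos)
      exact_mod_cast hcard
    calc Real.log T.card ≤ Real.log ((2 * d * m : ℕ) ^ k) := hlog
      _ = (k:ℝ) * Real.log (2 * d * m) := by
          rw [Real.log_pow]
          push_cast
          ring
      _ = (⌈a ^ 2 * b ^ 2 * (m : ℝ) ^ (2 / r) / ε ^ 2⌉ : ℝ) * Real.log (2 * d * m) := by
          rw [hkcast, hk0def, hC2]
  · -- covering property
    intro A hA
    -- the probability weights
    set L : ℝ := 1 - (∑ i, ∑ j, |A i j| * cn i) / C with hLdef
    have hStot : ∑ i, ∑ j, |A i j| * cn i ≤ C := by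
      rw [Finset.sum_comm]
      exact holder_chain p q r s hp hq hr hs hpq hrs hp2 a b ha hb X hX A hA
    have hL0 : 0 ≤ L := by
      rw [hLdef, sub_nonneg, div_le_one hC0]
      exact hStot
    set P : Bool × Fin d × Fin m → ℝ := fun z =>
      (if z.1 then max (A z.2.1 z.2.2) 0 else max (-(A z.2.1 z.2.2)) 0) * cn z.2.1 / C
        + L / (2 * d * m) with hPdef
    have hdm0 : (0:ℝ) < 2 * d * m := by positivity
    have hP0 : ∀ z, 0 ≤ P z := by
      intro z
      apply add_nonneg
      · apply div_nonneg _ hC0.le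
        apply mul_nonneg _ (hcn0 _)
        split_ifs <;> exact le_max_right _ _
      · exact div_nonneg hL0 hdm0.le
    have hmaxabs : ∀ x : ℝ, max x 0 + max (-x) 0 = |x| := by
      intro x
      rcases le_total 0 x with h | h
      · rw [max_eq_left h, max_eq_right (by linarith), abs_of_nonneg h, add_zero]
      · rw [max_eq_right h, max_eq_left (by linarith), abs_of_nonpos h, zero_add]
    have hmaxsub : ∀ x : ℝ, max x 0 - max (-x) 0 = x := by
      intro x
      rcases le_total 0 x with h | h
      · rw [max_eq_left h, max_eq_right (by linarith)]; ring
      · rw [max_eq_right h, max_eq_left (by linarith)]; ring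
    have hPsum : ∑ z, P z = 1 := by
      have h1 : ∑ z : Bool × Fin d × Fin m, P z
          = ∑ w : Fin d × Fin m, (P (true, w) + P (false, w)) := by
        rw [Fintype.sum_prod_type, Fintype.sum_bool, ← Finset.sum_add_distrib]
      have h2 : ∀ w : Fin d × Fin m, P (true, w) + P (false, w)
          = |A w.1 w.2| * cn w.1 / C + 2 * (L / (2 * d * m)) := by
        intro w
        have hmx := hmaxabs (A w.1 w.2)
        have ht' : P (true, w) = max (A w.1 w.2) 0 * cn w.1 / C + L / (2 * d * m) := rfl
        have hf' : P (false, w) = max (-(A w.1 w.2)) 0 * cn w.1 / C + L / (2 * d * m) := rfl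
        rw [ht', hf', ← hmx]
        ring
      have h3 : ∑ w : Fin d × Fin m, |A w.1 w.2| * cn w.1 / C
          = (∑ i, ∑ j, |A i j| * cn i) / C := by
        rw [Fintype.sum_prod_type, Finset.sum_div]
        exact Finset.sum_congr rfl fun i _ => by rw [Finset.sum_div]
      have h4 : ∑ _w : Fin d × Fin m, 2 * (L / (2 * d * m)) = L := by
        rw [Finset.sum_const, Finset.card_univ, Fintype.card_prod, Fintype.card_fin,
          Fintype.card_fin, nsmul_eq_mul]
        push_cast
        field_simp
      rw [h1, Finset.sum_congr rfl fun w _ => h2 w, Finset.sum_add_distrib, h3, h4, hLdef]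
      have hCne : C ≠ 0 := hC0.ne'
      field_simp
      ring
    have hPmean : ∑ z, P z • vec z = (WithLp.equiv 2 _).symm
        (fun kl : Fin n × Fin m => (X * A) kl.1 kl.2) := by
      apply (WithLp.equiv 2 ((Fin n × Fin m) → ℝ)).injective
      rw [Equiv.apply_symm_apply]
      funext kl
      rw [WithLp.equiv_apply]
      rw [euclid_sum_apply]
      have happ : ∀ z, (P z • vec z) kl = P z * vec z kl := fun z => rfl
      rw [Finset.sum_congr rfl fun z _ => happ z]
      have h1 : ∑ z : Bool × Fin d × Fin m, P z * vec z kl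
          = ∑ w : Fin d × Fin m, (P (true, w) * vec (true, w) kl
              + P (false, w) * vec (false, w) kl) := by
        rw [Fintype.sum_prod_type, Fintype.sum_bool, ← Finset.sum_add_distrib]
      have h2 : ∀ w : Fin d × Fin m, P (true, w) * vec (true, w) kl
          + P (false, w) * vec (false, w) kl
          = if kl.2 = w.2 then A w.1 w.2 * X kl.1 w.1 else 0 := by
        intro w
        have ht' : P (true, w) = max (A w.1 w.2) 0 * cn w.1 / C + L / (2 * d * m) := rfl
        have hf' : P (false, w) = max (-(A w.1 w.2)) 0 * cn w.1 / C + L / (2 * d * m) := rfl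
        have hvt : vec (true, w) kl
            = 1 * (C * (if kl.2 = w.2 then X kl.1 w.1 / cn w.1 else 0)) := rfl
        have hvf : vec (false, w) kl
            = -1 * (C * (if kl.2 = w.2 then X kl.1 w.1 / cn w.1 else 0)) := rfl
        rw [ht', hf', hvt, hvf]
        have hsub := hmaxsub (A w.1 w.2)
        have hD : C * C⁻¹ = 1 := mul_inv_cancel₀ hC0.ne'
        have hstep : ∀ e u v L' : ℝ, (u * cn w.1 / C + L') * (1 * (C * e))
            + (v * cn w.1 / C + L') * (-1 * (C * e))
            = (u - v) * cn w.1 * e := by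
          intro e u v L'
          rw [div_eq_mul_inv, div_eq_mul_inv]
          linear_combination ((u - v) * cn w.1 * e) * hD
        rw [hstep, hsub]
        rcases eq_or_ne kl.2 w.2 with hj | hj
        · rw [if_pos hj, if_pos hj, mul_assoc, hcnmul]
        · rw [if_neg hj, if_neg hj, mul_zero]
      rw [h1, Finset.sum_congr rfl fun w _ => h2 w]
      rw [Fintype.sum_prod_type]
      have h3 : ∀ i : Fin d, ∑ j : Fin m, (if kl.2 = j then A i j * X kl.1 i else 0)
          = A i kl.2 * X kl.1 i := by
        intro i
        rw [Finset.sum_ite_eq univ kl.2 (fun j => A i j * X kl.1 i)]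
        simp
      rw [Finset.sum_congr rfl fun i _ => h3 i, Matrix.mul_apply]
      exact Finset.sum_congr rfl fun i _ => mul_comm _ _
    obtain ⟨f, hf⟩ := maurey vec P hP0 hPsum hvecnorm k
    refine ⟨Matrix.of fun k' l => (k:ℝ)⁻¹ * ((∑ t, vec (f t)) (k', l)), ?_, ?_⟩
    · rw [hTdef]
      exact Finset.mem_image.2 ⟨f, mem_univ _, rfl⟩
    · set Sv : EuclideanSpace ℝ (Fin n × Fin m) := ∑ t, vec (f t) with hSv
      set M : EuclideanSpace ℝ (Fin n × Fin m) :=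
        (WithLp.equiv 2 _).symm (fun kl : Fin n × Fin m => (X * A) kl.1 kl.2) with hMdef
      rw [hPmean] at hf
      have hfrob : frobNorm (X * A - Matrix.of fun k' l => (k:ℝ)⁻¹ * (Sv (k', l)))
          = ‖M - (k:ℝ)⁻¹ • Sv‖ := by
        rw [frobNorm, EuclideanSpace.norm_eq]
        congr 1
        rw [Fintype.sum_prod_type]
        refine Finset.sum_congr rfl fun k' _ => Finset.sum_congr rfl fun l _ => ?_
        have h5 : (M - (k:ℝ)⁻¹ • Sv) (k', l) = (X * A) k' l - (k:ℝ)⁻¹ * Sv (k', l) := by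
          rw [PiLp.sub_apply, PiLp.smul_apply, smul_eq_mul]
          rfl
        rw [Real.norm_eq_abs, sq_abs, h5, Matrix.sub_apply, Matrix.of_apply]
      have heq : M - (k:ℝ)⁻¹ • Sv = (k:ℝ)⁻¹ • ((k:ℝ) • M - Sv) := by
        rw [smul_sub, smul_smul, inv_mul_cancel₀ hkpos.ne', one_smul]
      have hk' : (k:ℝ) * (k:ℝ)⁻¹ = 1 := mul_inv_cancel₀ hkpos.ne'
      have hnorm : ‖M - (k:ℝ)⁻¹ • Sv‖ ^ 2 ≤ C ^ 2 / k := by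
        rw [heq, norm_smul, mul_pow]
        have h6 : ‖(k:ℝ)⁻¹‖ ^ 2 = ((k:ℝ) ^ 2)⁻¹ := by
          rw [Real.norm_eq_abs, abs_inv, abs_of_nonneg hkpos.le, inv_pow]
        have h7 : ‖(k:ℝ) • M - Sv‖ ^ 2 = ‖Sv - (k:ℝ) • M‖ ^ 2 := by rw [norm_sub_rev]
        rw [h6, h7]
        calc ((k:ℝ) ^ 2)⁻¹ * ‖Sv - (k:ℝ) • M‖ ^ 2 ≤ ((k:ℝ) ^ 2)⁻¹ * ((k:ℕ) * C ^ 2) :=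
            mul_le_mul_of_nonneg_left hf (by positivity)
          _ = C ^ 2 / (k:ℝ) := by
            rw [div_eq_mul_inv, pow_two, mul_inv]
            linear_combination (C ^ 2 * (k:ℝ)⁻¹) * hk'
      have hfin : ‖M - (k:ℝ)⁻¹ • Sv‖ ^ 2 ≤ ε ^ 2 := by
        refine le_trans hnorm ?_
        rw [div_le_iff₀ hkpos]
        have h8 := (div_le_iff₀ (by positivity : (0:ℝ) < ε ^ 2)).mp hkge
        linarith
      rw [hfrob]
      exact le_of_sq_le_sq' (norm_nonneg _) hε.le hfin
end

section
/- Let n ≥ 1 and R ≥ 0, and let S ⊆ ℝⁿ be a nonempty set with 0 ∈ S and ‖v‖₂ ≤ √n for all v ∈ S. Suppose that for every ε > 0 the set S admits an ε-cover (with respect to the Euclidean norm) of cardinality at most exp(R/ε²). Then the empirical Rademacher complexity satisfies R̂(S) ≤ 4/n^{3/2} + (18/n)·√R·log n. -/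
/-- The empirical Rademacher complexity of a set `S ⊆ ℝⁿ`:
`R̂(S) = 2^{-n} Σ_{σ ∈ {-1,1}ⁿ} sup_{v ∈ S} (1/n) Σ_i σ_i v_i`. -/
noncomputable def empRad {n : ℕ} (S : Set (Fin n → ℝ)) : ℝ :=
  (1 / 2 ^ n) * ∑ ε : Fin n → Bool,
    sSup ((fun v : Fin n → ℝ =>
      (1 / (n : ℝ)) * ∑ i, (if ε i then (1 : ℝ) else -1) * v i) '' S)

/-- The Euclidean norm on `ℝⁿ`. -/
noncomputable def euclNorm {n : ℕ} (v : Fin n → ℝ) : ℝ :=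
  Real.sqrt (∑ i, (v i) ^ 2)

/-- The Rademacher sum `⟨σ, v⟩`. -/
noncomputable def radSum {n : ℕ} (σ : Fin n → Bool) (v : Fin n → ℝ) : ℝ :=
  ∑ i, (if σ i then (1 : ℝ) else -1) * v i

lemma radSum_sub {n : ℕ} (σ : Fin n → Bool) (a b : Fin n → ℝ) :
    radSum σ (a - b) = radSum σ a - radSum σ b := by
  simp [radSum, mul_sub, Finset.sum_sub_distrib]

lemma radSum_zero {n : ℕ} (σ : Fin n → Bool) : radSum σ (0 : Fin n → ℝ) = 0 := by
  simp [radSum]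

lemma euclNorm_nonneg {n : ℕ} (v : Fin n → ℝ) : 0 ≤ euclNorm v := Real.sqrt_nonneg _

lemma euclNorm_eq_norm {n : ℕ} (v : Fin n → ℝ) :
    euclNorm v = ‖(WithLp.equiv 2 (Fin n → ℝ)).symm v‖ := by
  rw [EuclideanSpace.norm_eq]
  simp [euclNorm, sq_abs]

lemma euclNorm_add_le {n : ℕ} (a b : Fin n → ℝ) :
    euclNorm (a + b) ≤ euclNorm a + euclNorm b := by
  rw [euclNorm_eq_norm, euclNorm_eq_norm, euclNorm_eq_norm]
  exact norm_add_le _ _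

lemma radSum_le {n : ℕ} (σ : Fin n → Bool) (w : Fin n → ℝ) :
    radSum σ w ≤ Real.sqrt n * euclNorm w := by
  have h := Finset.sum_mul_sq_le_sq_mul_sq Finset.univ
    (fun i => if σ i then (1 : ℝ) else -1) w
  have h1 : (∑ i, (if σ i then (1 : ℝ) else -1) ^ 2) = (n : ℝ) := by
    have : ∀ i : Fin n, (if σ i then (1 : ℝ) else -1) ^ 2 = 1 := by
      intro i; by_cases h : σ i <;> simp [h]
    simp [this]
  rw [h1] at h
  calc radSum σ w ≤ |radSum σ w| := le_abs_self _
    _ = Real.sqrt ((radSum σ w) ^ 2) := (Real.sqrt_sq_eq_abs _).symm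
    _ ≤ Real.sqrt ((n : ℝ) * ∑ i, w i ^ 2) := Real.sqrt_le_sqrt h
    _ = Real.sqrt n * euclNorm w := by
        rw [Real.sqrt_mul (Nat.cast_nonneg n)]; rfl

lemma mgf_bound {n : ℕ} (l : ℝ) (d : Fin n → ℝ) :
    ∑ σ : Fin n → Bool, Real.exp (l * radSum σ d) ≤
      2 ^ n * Real.exp (l ^ 2 * (∑ i, d i ^ 2) / 2) := by
  have step1 : ∀ σ : Fin n → Bool,
      Real.exp (l * radSum σ d) = ∏ i, Real.exp (l * ((if σ i then (1:ℝ) else -1) * d i)) := by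
    intro σ
    rw [← Real.exp_sum, radSum, Finset.mul_sum]
  calc ∑ σ : Fin n → Bool, Real.exp (l * radSum σ d)
      = ∑ σ : Fin n → Bool, ∏ i, Real.exp (l * ((if σ i then (1:ℝ) else -1) * d i)) := by
        exact Finset.sum_congr rfl fun σ _ => step1 σ
    _ = ∏ i, ∑ b : Bool, Real.exp (l * ((if b then (1:ℝ) else -1) * d i)) := by
        rw [Fintype.prod_sum (κ := fun _ : Fin n => Bool)
          (f := fun i b => Real.exp (l * ((if b then (1:ℝ) else -1) * d i)))]
    _ = ∏ i, 2 * Real.cosh (l * d i) := by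
        refine Finset.prod_congr rfl fun i _ => ?_
        rw [Real.cosh_eq]
        simp [Fintype.sum_bool]
        ring_nf
    _ ≤ ∏ i, 2 * Real.exp ((l * d i) ^ 2 / 2) := by
        refine Finset.prod_le_prod (fun i _ => by positivity) fun i _ => ?_
        have := Real.cosh_le_exp_half_sq (l * d i)
        linarith
    _ = 2 ^ n * Real.exp (l ^ 2 * (∑ i, d i ^ 2) / 2) := by
        have h3 : (∑ i, (l * d i) ^ 2) = l ^ 2 * ∑ i, d i ^ 2 := by
          rw [Finset.mul_sum]; exact Finset.sum_congr rfl fun i _ => by ring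
        rw [Finset.prod_mul_distrib, Finset.prod_const, ← Real.exp_sum, Finset.card_univ,
          Fintype.card_fin, ← Finset.sum_div, h3]

lemma jensen_exp {n : ℕ} (f : (Fin n → Bool) → ℝ) :
    Real.exp ((1 / 2 ^ n) * ∑ σ : Fin n → Bool, f σ) ≤
      (1 / 2 ^ n) * ∑ σ : Fin n → Bool, Real.exp (f σ) := by
  have hcard : ((Finset.univ : Finset (Fin n → Bool)).card : ℝ) = 2 ^ n := by
    simp [Finset.card_univ]
  have h := Real.geom_mean_le_arith_mean_weighted Finset.univ
    (fun _ : Fin n → Bool => (1 / 2 ^ n : ℝ)) (fun σ => Real.exp (f σ))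
    (fun _ _ => by positivity)
    (by rw [Finset.sum_const, nsmul_eq_mul, hcard]; field_simp)
    (fun _ _ => (Real.exp_pos _).le)
  calc Real.exp ((1 / 2 ^ n) * ∑ σ, f σ)
      = ∏ σ : Fin n → Bool, Real.exp (f σ) ^ ((1:ℝ) / 2 ^ n) := by
        have h2 : ∀ σ : Fin n → Bool, Real.exp (f σ) ^ ((1:ℝ)/2^n) = Real.exp (f σ * (1/2^n)) :=
          fun σ => (Real.exp_mul _ _).symm
        refine Eq.symm ?_
        calc ∏ σ : Fin n → Bool, Real.exp (f σ) ^ ((1:ℝ)/2^n)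
            = ∏ σ : Fin n → Bool, Real.exp (f σ * (1/2^n)) :=
              Finset.prod_congr rfl fun σ _ => h2 σ
          _ = Real.exp (∑ σ : Fin n → Bool, f σ * (1/2^n)) := (Real.exp_sum _ _).symm
          _ = Real.exp ((1/2^n) * ∑ σ : Fin n → Bool, f σ) := by
              rw [← Finset.sum_mul]; ring_nf
    _ ≤ ∑ σ : Fin n → Bool, (1 / 2 ^ n) * Real.exp (f σ) := h
    _ = (1 / 2 ^ n) * ∑ σ : Fin n → Bool, Real.exp (f σ) := by rw [← Finset.mul_sum]

lemma sum_radSum_zero {n : ℕ} (d : Fin n → ℝ) :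
    ∑ σ : Fin n → Bool, radSum σ d = 0 := by
  have hinv : Function.Involutive (fun σ : Fin n → Bool => fun i => !(σ i)) := by
    intro σ; funext i; simp
  have hneg : ∀ σ : Fin n → Bool, radSum (fun i => !(σ i)) d = -radSum σ d := by
    intro σ
    rw [radSum, radSum, ← Finset.sum_neg_distrib]
    refine Finset.sum_congr rfl fun i _ => ?_
    by_cases h : σ i <;> simp [h]
  have h := Fintype.sum_bijective _ hinv.bijective
    (fun σ => radSum σ d) (fun σ => -radSum σ d) (fun σ => by simp [hneg σ])
  rw [Finset.sum_neg_distrib] at h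
  linarith [h]

set_option maxHeartbeats 1000000 in
lemma massart {n : ℕ} (D : Finset (Fin n → ℝ)) (hD : D.Nonempty) {B : ℝ} (hB : 0 ≤ B)
    (hnorm : ∀ d ∈ D, euclNorm d ≤ B) :
    (1 / 2 ^ n : ℝ) * ∑ σ : Fin n → Bool, D.sup' hD (fun d => radSum σ d) ≤
      B * Real.sqrt (2 * Real.log D.card) := by
  have hsq : ∀ d ∈ D, (∑ i, d i ^ 2) ≤ B ^ 2 := by
    intro d hd
    have h1 : (euclNorm d) ^ 2 ≤ B ^ 2 := pow_le_pow_left₀ (euclNorm_nonneg d) (hnorm d hd) 2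
    rwa [euclNorm, Real.sq_sqrt (Finset.sum_nonneg fun i _ => sq_nonneg _)] at h1
  by_cases hcard : D.card = 1
  · -- single element: expectation is zero
    obtain ⟨d₀, rfl⟩ := Finset.card_eq_one.mp hcard
    simp only [Finset.sup'_singleton]
    rw [sum_radSum_zero d₀]
    simp only [mul_zero]
    positivity
  · -- at least two elements
    have hN1 : 1 ≤ D.card := hD.card_pos
    have hN2 : 2 ≤ D.card := by omega
    have hN2' : 1 < D.card := by omega
    have hlogN : 0 < Real.log D.card := Real.log_pos (by exact_mod_cast hN2')
    by_cases hB0 : B = 0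
    · -- all elements are 0
      have hzero : ∀ d ∈ D, ∀ i, d i = 0 := by
        intro d hd i
        have h1 := hsq d hd
        rw [hB0] at h1
        have h2 : (0:ℝ) ≤ ∑ i, d i ^ 2 := Finset.sum_nonneg fun i _ => sq_nonneg _
        have h3 : ∑ i, d i ^ 2 = 0 := le_antisymm (by simpa using h1) h2
        have := (Finset.sum_eq_zero_iff_of_nonneg (fun i _ => sq_nonneg (d i))).mp h3 i
          (Finset.mem_univ i)
        exact pow_eq_zero_iff (two_ne_zero) |>.mp this
      have hsup : ∀ σ : Fin n → Bool, D.sup' hD (fun d => radSum σ d) = 0 := by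
        intro σ
        apply le_antisymm
        · apply Finset.sup'_le
          intro d hd
          have : radSum σ d = 0 := by
            rw [radSum]; exact Finset.sum_eq_zero fun i _ => by rw [hzero d hd i, mul_zero]
          exact this.le
        · obtain ⟨d, hd⟩ := hD
          refine le_trans ?_ (Finset.le_sup' _ hd)
          rw [radSum]
          rw [Finset.sum_eq_zero fun i _ => by rw [hzero d hd i, mul_zero]]
      rw [Finset.sum_congr rfl fun σ _ => hsup σ]
      simp only [Finset.sum_const, smul_zero, mul_zero, hB0, zero_mul]
      exact le_rfl
    · have hBpos : 0 < B := lt_of_le_of_ne hB (Ne.symm hB0)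
      set s : ℝ := Real.sqrt (2 * Real.log D.card) with hs
      have hs_pos : 0 < s := Real.sqrt_pos.mpr (by linarith)
      have hs_sq : s ^ 2 = 2 * Real.log D.card :=
        Real.sq_sqrt (by linarith)
      set L : ℝ := s / B with hL
      have hLpos : 0 < L := div_pos hs_pos hBpos
      set E : ℝ := (1 / 2 ^ n : ℝ) * ∑ σ : Fin n → Bool, D.sup' hD (fun d => radSum σ d)
        with hE
      have key : Real.exp (L * E) ≤ D.card * Real.exp (L ^ 2 * B ^ 2 / 2) := by
        have j : Real.exp (L * E) ≤
            (1 / 2 ^ n : ℝ) * ∑ σ : Fin n → Bool,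
              Real.exp (L * D.sup' hD (fun d => radSum σ d)) := by
          have := jensen_exp (n := n) (fun σ => L * D.sup' hD (fun d => radSum σ d))
          calc Real.exp (L * E) = Real.exp ((1/2^n : ℝ) *
              ∑ σ : Fin n → Bool, L * D.sup' hD (fun d => radSum σ d)) := by
                rw [hE, ← Finset.mul_sum]; ring_nf
            _ ≤ _ := this
        have step2 : ∀ σ : Fin n → Bool,
            Real.exp (L * D.sup' hD (fun d => radSum σ d)) ≤
              ∑ d ∈ D, Real.exp (L * radSum σ d) := by
          intro σ
          obtain ⟨d, hd, hsup⟩ := Finset.exists_mem_eq_sup' hD (fun d => radSum σ d)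
          rw [hsup]
          exact Finset.single_le_sum (f := fun d => Real.exp (L * radSum σ d))
            (fun d _ => (Real.exp_pos _).le) hd
        have step3 : ∑ σ : Fin n → Bool, ∑ d ∈ D, Real.exp (L * radSum σ d) ≤
            D.card * (2 ^ n * Real.exp (L ^ 2 * B ^ 2 / 2)) := by
          rw [Finset.sum_comm]
          calc ∑ d ∈ D, ∑ σ : Fin n → Bool, Real.exp (L * radSum σ d)
              ≤ ∑ d ∈ D, 2 ^ n * Real.exp (L ^ 2 * B ^ 2 / 2) := by
                refine Finset.sum_le_sum fun d hd => ?_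
                refine le_trans (mgf_bound L d) ?_
                have h1 : L ^ 2 * (∑ i, d i ^ 2) / 2 ≤ L ^ 2 * B ^ 2 / 2 := by
                  have := hsq d hd
                  nlinarith [sq_nonneg L]
                have := Real.exp_le_exp.mpr h1
                nlinarith [Real.exp_pos (L ^ 2 * (∑ i, d i ^ 2) / 2), pow_pos (two_pos (α := ℝ)) n]
            _ = D.card * (2 ^ n * Real.exp (L ^ 2 * B ^ 2 / 2)) := by
                rw [Finset.sum_const, nsmul_eq_mul]
        calc Real.exp (L * E)
            ≤ (1 / 2 ^ n : ℝ) * ∑ σ : Fin n → Bool,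
              Real.exp (L * D.sup' hD (fun d => radSum σ d)) := j
          _ ≤ (1 / 2 ^ n : ℝ) * ∑ σ : Fin n → Bool, ∑ d ∈ D, Real.exp (L * radSum σ d) := by
              have hpos : (0:ℝ) < (2:ℝ) ^ n := pow_pos two_pos n
              refine mul_le_mul_of_nonneg_left ?_ (by positivity)
              exact Finset.sum_le_sum fun σ _ => step2 σ
          _ ≤ (1 / 2 ^ n : ℝ) * (D.card * (2 ^ n * Real.exp (L ^ 2 * B ^ 2 / 2))) := by
              have hpos : (0:ℝ) < (2:ℝ) ^ n := pow_pos two_pos n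
              exact mul_le_mul_of_nonneg_left step3 (by positivity)
          _ = D.card * Real.exp (L ^ 2 * B ^ 2 / 2) := by
              have hpos : (0:ℝ) ≠ (2:ℝ) ^ n := (pow_pos (two_pos (α := ℝ)) n).ne
              field_simp
      -- take logs
      have hcardpos : (0:ℝ) < D.card := by exact_mod_cast hN1
      have hlog : L * E ≤ Real.log D.card + L ^ 2 * B ^ 2 / 2 := by
        have h1 : Real.log (Real.exp (L * E)) ≤
            Real.log (D.card * Real.exp (L ^ 2 * B ^ 2 / 2)) :=
          Real.log_le_log (Real.exp_pos _) key
        rwa [Real.log_exp, Real.log_mul hcardpos.ne' (Real.exp_pos _).ne',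
          Real.log_exp] at h1
      have hE_le : E ≤ Real.log D.card / L + L * B ^ 2 / 2 := by
        have hid : L * (Real.log D.card / L) = Real.log D.card := by field_simp
        nlinarith [hlog, hid, hLpos]
      have hfinal : Real.log D.card / L + L * B ^ 2 / 2 = B * s := by
        have hlogeq : Real.log D.card = s ^ 2 / 2 := by rw [hs_sq]; ring
        rw [hlogeq, hL]
        field_simp
        ring
      exact hE_le.trans (le_of_eq hfinal)

lemma euclNorm_sub_comm {n : ℕ} (a b : Fin n → ℝ) :
    euclNorm (a - b) = euclNorm (b - a) := by
  unfold euclNorm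
  congr 1
  refine Finset.sum_congr rfl fun i _ => ?_
  rw [Pi.sub_apply, Pi.sub_apply]
  ring


set_option maxHeartbeats 1600000 in
/-- If `S ⊆ ℝⁿ` is nonempty with `0 ∈ S` and `‖v‖₂ ≤ √n` for all
`v ∈ S`, and for every `ε > 0` the set `S` admits an `ε`-cover of cardinality at most
`exp(R/ε²)`, then `R̂(S) ≤ 4/n^{3/2} + (18/n)·√R·log n`. -/
theorem rademacher_bound_from_covering {n : ℕ} (hn : 1 ≤ n) (R : ℝ) (hR : 0 ≤ R)
    (S : Set (Fin n → ℝ)) (hS : S.Nonempty) (h0 : (0 : Fin n → ℝ) ∈ S)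
    (hbound : ∀ v ∈ S, euclNorm v ≤ Real.sqrt n)
    (hcov : ∀ ε : ℝ, 0 < ε → ∃ T : Finset (Fin n → ℝ),
      (T.card : ℝ) ≤ Real.exp (R / ε ^ 2) ∧ ∀ v ∈ S, ∃ t ∈ T, euclNorm (v - t) ≤ ε) :
    empRad S ≤ 4 / (n : ℝ) ^ ((3 : ℝ) / 2) + (18 / n) * Real.sqrt R * Real.log n := by
  classical
  obtain ⟨v₀, hv₀⟩ := hS
  have hSne : S.Nonempty := ⟨v₀, hv₀⟩
  have hn' : (0:ℝ) < n := by exact_mod_cast hn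
  have hsqn : (0:ℝ) < Real.sqrt n := Real.sqrt_pos.mpr hn'
  set eps : ℕ → ℝ := fun j => Real.sqrt n / 2 ^ j with heps
  have heps_pos : ∀ j, 0 < eps j := fun j => div_pos hsqn (by positivity)
  have heps_succ : ∀ j, eps j = 2 * eps (j+1) := by
    intro j
    rw [heps]
    simp only
    rw [pow_succ]
    field_simp
  -- covers
  choose Tc hTc_card hTc_cov using fun j : ℕ => hcov (eps (j+1)) (heps_pos (j+1))
  set Tf : ℕ → Finset (Fin n → ℝ) := fun j => Nat.casesOn j {0} (fun j => Tc j) with hTf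
  have hTf_card : ∀ j, ((Tf j).card : ℝ) ≤ Real.exp (R / eps j ^ 2) := by
    rintro (_ | j)
    · have h1 : ((Tf 0).card : ℝ) = 1 := by simp [hTf]
      rw [h1]
      calc (1:ℝ) = Real.exp 0 := Real.exp_zero.symm
        _ ≤ _ := Real.exp_le_exp.mpr (by positivity)
    · exact hTc_card j
  have hTf_cov : ∀ j, ∀ v ∈ S, ∃ t ∈ Tf j, euclNorm (v - t) ≤ eps j := by
    rintro (_ | j) v hv
    · refine ⟨0, Finset.mem_singleton_self 0, ?_⟩
      rw [sub_zero]
      have he0 : eps 0 = Real.sqrt n := by rw [heps]; simp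
      rw [he0]
      exact hbound v hv
    · exact hTc_cov j v hv
  choose c hc_mem hc_dist using fun j v (hv : v ∈ S) => hTf_cov j v hv
  have hc0 : ∀ v (hv : v ∈ S), c 0 v hv = 0 :=
    fun v hv => Finset.mem_singleton.mp (hc_mem 0 v hv)
  -- link sets
  set D : ℕ → Finset (Fin n → ℝ) := fun j =>
    (((Tf (j+1)) ×ˢ (Tf j)).filter
      (fun p => euclNorm (p.1 - p.2) ≤ 3 * eps (j+1))).image (fun p => p.1 - p.2) with hDdef
  have hmemD : ∀ j v (hv : v ∈ S), c (j+1) v hv - c j v hv ∈ D j := by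
    intro j v hv
    refine Finset.mem_image.mpr ⟨(c (j+1) v hv, c j v hv), ?_, rfl⟩
    refine Finset.mem_filter.mpr ⟨Finset.mem_product.mpr ⟨hc_mem _ _ _, hc_mem _ _ _⟩, ?_⟩
    have h1 : euclNorm (c (j+1) v hv - c j v hv) ≤
        euclNorm (c (j+1) v hv - v) + euclNorm (v - c j v hv) := by
      have := euclNorm_add_le (c (j+1) v hv - v) (v - c j v hv)
      rwa [sub_add_sub_cancel] at this
    have h2 : euclNorm (c (j+1) v hv - v) = euclNorm (v - c (j+1) v hv) :=
      euclNorm_sub_comm _ _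
    have h3 := hc_dist (j+1) v hv
    have h4 := hc_dist j v hv
    have h5 := heps_succ j
    calc euclNorm (c (j+1) v hv - c j v hv)
        ≤ euclNorm (c (j+1) v hv - v) + euclNorm (v - c j v hv) := h1
      _ ≤ eps (j+1) + eps j := by rw [h2]; exact add_le_add h3 h4
      _ = 3 * eps (j+1) := by rw [h5]; ring
  have hDne : ∀ j, (D j).Nonempty := fun j => ⟨_, hmemD j v₀ hv₀⟩
  have hDnorm : ∀ j, ∀ d ∈ D j, euclNorm d ≤ 3 * eps (j+1) := by
    intro j d hd
    obtain ⟨p, hp, rfl⟩ := Finset.mem_image.mp hd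
    exact (Finset.mem_filter.mp hp).2
  -- cardinality bound
  have hDlog : ∀ j, Real.log ((D j).card) ≤ 2 * R / eps (j+1) ^ 2 := by
    intro j
    have h1 : (D j).card ≤ (Tf (j+1)).card * (Tf j).card := by
      calc (D j).card ≤ (((Tf (j+1)) ×ˢ (Tf j)).filter
            (fun p => euclNorm (p.1 - p.2) ≤ 3 * eps (j+1))).card := Finset.card_image_le
        _ ≤ ((Tf (j+1)) ×ˢ (Tf j)).card := Finset.card_filter_le _ _
        _ = (Tf (j+1)).card * (Tf j).card := Finset.card_product _ _
    have heps_le : eps (j+1) ≤ eps j := by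
      have ha := heps_succ j; have hb := heps_pos (j+1); linarith
    have hdiv : R / eps j ^ 2 ≤ R / eps (j+1) ^ 2 := by
      have h2 : 0 < eps (j+1) ^ 2 := by positivity
      have h3 : eps (j+1) ^ 2 ≤ eps j ^ 2 := by nlinarith [heps_pos (j+1)]
      exact div_le_div_of_nonneg_left hR h2 h3
    have hcard : ((D j).card : ℝ) ≤ Real.exp (2 * R / eps (j+1) ^ 2) := by
      calc ((D j).card : ℝ) ≤ ((Tf (j+1)).card : ℝ) * ((Tf j).card : ℝ) := by exact_mod_cast h1
        _ ≤ Real.exp (R / eps (j+1) ^ 2) * Real.exp (R / eps j ^ 2) :=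
            mul_le_mul (hTf_card (j+1)) (hTf_card j) (Nat.cast_nonneg _) (Real.exp_pos _).le
        _ = Real.exp (R / eps (j+1) ^ 2 + R / eps j ^ 2) := (Real.exp_add _ _).symm
        _ ≤ Real.exp (2 * R / eps (j+1) ^ 2) := by
            apply Real.exp_le_exp.mpr
            have he : (2:ℝ) * R / eps (j+1) ^ 2 = R / eps (j+1) ^ 2 + R / eps (j+1) ^ 2 := by
              ring
            rw [he]
            linarith
    have hpos : (0:ℝ) < ((D j).card : ℝ) := by exact_mod_cast (hDne j).card_pos
    calc Real.log ((D j).card) ≤ Real.log (Real.exp (2 * R / eps (j+1) ^ 2)) :=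
          Real.log_le_log hpos hcard
      _ = 2 * R / eps (j+1) ^ 2 := Real.log_exp _
  -- Massart per level
  have hMas : ∀ j, (1 / 2 ^ n : ℝ) *
      ∑ σ : Fin n → Bool, (D j).sup' (hDne j) (fun d => radSum σ d) ≤ 6 * Real.sqrt R := by
    intro j
    have hB : (0:ℝ) ≤ 3 * eps (j+1) := by positivity
    have h1 := massart (D j) (hDne j) hB (hDnorm j)
    refine h1.trans ?_
    have h3 : 2 * Real.log ((D j).card) ≤ (2 * Real.sqrt R / eps (j+1)) ^ 2 := by
      have hsq : (2 * Real.sqrt R / eps (j+1)) ^ 2 = 4 * R / eps (j+1) ^ 2 := by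
        rw [div_pow, mul_pow, Real.sq_sqrt hR]
        norm_num
      have h4 : (4:ℝ) * R / eps (j+1) ^ 2 = 2 * (2 * R / eps (j+1) ^ 2) := by ring
      rw [hsq, h4]
      linarith [hDlog j]
    have h2 : Real.sqrt (2 * Real.log ((D j).card)) ≤ 2 * Real.sqrt R / eps (j+1) := by
      calc Real.sqrt (2 * Real.log ((D j).card))
          ≤ Real.sqrt ((2 * Real.sqrt R / eps (j+1)) ^ 2) := Real.sqrt_le_sqrt h3
        _ = 2 * Real.sqrt R / eps (j+1) := Real.sqrt_sq (by positivity)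
    calc 3 * eps (j+1) * Real.sqrt (2 * Real.log ((D j).card))
        ≤ 3 * eps (j+1) * (2 * Real.sqrt R / eps (j+1)) :=
          mul_le_mul_of_nonneg_left h2 hB
      _ = 6 * Real.sqrt R := by
          rw [mul_div_assoc', div_eq_iff (heps_pos (j+1)).ne']
          ring
  -- chaining pointwise bound
  set m := Nat.log 2 (n ^ 2) with hm
  have hchain : ∀ (σ : Fin n → Bool) v (hv : v ∈ S),
      radSum σ v ≤ Real.sqrt n * eps m +
        ∑ j ∈ Finset.range m, (D j).sup' (hDne j) (fun d => radSum σ d) := by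
    intro σ v hv
    have htel : ∑ j ∈ Finset.range m, (radSum σ (c (j+1) v hv) - radSum σ (c j v hv))
        = radSum σ (c m v hv) - radSum σ (c 0 v hv) :=
      Finset.sum_range_sub (fun j => radSum σ (c j v hv)) m
    have hv_split : radSum σ v = radSum σ (v - c m v hv) + radSum σ (c m v hv) := by
      rw [radSum_sub]; ring
    have h1 : radSum σ (v - c m v hv) ≤ Real.sqrt n * eps m :=
      (radSum_le σ _).trans (mul_le_mul_of_nonneg_left (hc_dist m v hv) hsqn.le)
    have h0' : radSum σ (c 0 v hv) = 0 := by rw [hc0 v hv]; exact radSum_zero σ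
    have h2 : radSum σ (c m v hv) ≤
        ∑ j ∈ Finset.range m, (D j).sup' (hDne j) (fun d => radSum σ d) := by
      have he : radSum σ (c m v hv) =
          ∑ j ∈ Finset.range m, (radSum σ (c (j+1) v hv) - radSum σ (c j v hv)) := by
        rw [htel, h0', sub_zero]
      rw [he]
      refine Finset.sum_le_sum fun j _ => ?_
      rw [← radSum_sub]
      exact Finset.le_sup' (fun d => radSum σ d) (hmemD j v hv)
    linarith [hv_split, h1, h2]
  -- sSup bound per sign vector
  have hsup_bound : ∀ σ : Fin n → Bool,
      sSup ((fun v : Fin n → ℝ =>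
          (1 / (n : ℝ)) * ∑ i, (if σ i then (1 : ℝ) else -1) * v i) '' S)
        ≤ (1 / (n:ℝ)) * (Real.sqrt n * eps m +
            ∑ j ∈ Finset.range m, (D j).sup' (hDne j) (fun d => radSum σ d)) := by
    intro σ
    apply csSup_le (hSne.image _)
    rintro x ⟨v, hv, rfl⟩
    have hle := hchain σ v hv
    have hn0 : (0:ℝ) ≤ 1 / (n:ℝ) := by positivity
    show (1 / (n:ℝ)) * ∑ i, (if σ i then (1 : ℝ) else -1) * v i ≤ _
    calc (1 / (n:ℝ)) * ∑ i, (if σ i then (1 : ℝ) else -1) * v i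
        = (1 / (n:ℝ)) * radSum σ v := rfl
      _ ≤ _ := mul_le_mul_of_nonneg_left hle hn0
  -- put it together
  have hcard2 : ((Finset.univ : Finset (Fin n → Bool)).card : ℝ) = 2 ^ n := by
    simp [Finset.card_univ]
  have hemp : empRad S ≤ (1 / (n:ℝ)) * (Real.sqrt n * eps m) +
      (1 / (n:ℝ)) * ((m : ℝ) * (6 * Real.sqrt R)) := by
    have hstep : empRad S ≤ (1 / 2 ^ n : ℝ) * ∑ σ : Fin n → Bool,
        (1 / (n:ℝ)) * (Real.sqrt n * eps m +
          ∑ j ∈ Finset.range m, (D j).sup' (hDne j) (fun d => radSum σ d)) := by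
      unfold empRad
      exact mul_le_mul_of_nonneg_left
        (Finset.sum_le_sum fun σ _ => hsup_bound σ) (by positivity)
    have hswap : ∑ σ : Fin n → Bool, ∑ j ∈ Finset.range m,
          (D j).sup' (hDne j) (fun d => radSum σ d)
        = ∑ j ∈ Finset.range m, ∑ σ : Fin n → Bool,
          (D j).sup' (hDne j) (fun d => radSum σ d) := Finset.sum_comm
    have hin : (1 / 2 ^ n : ℝ) * ∑ σ : Fin n → Bool, (Real.sqrt n * eps m +
          ∑ j ∈ Finset.range m, (D j).sup' (hDne j) (fun d => radSum σ d))
        ≤ Real.sqrt n * eps m + (m:ℝ) * (6 * Real.sqrt R) := by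
      rw [Finset.sum_add_distrib, Finset.sum_const, hswap, nsmul_eq_mul, hcard2, mul_add]
      have hA : (1 / 2^n : ℝ) * ((2:ℝ)^n * (Real.sqrt n * eps m)) = Real.sqrt n * eps m := by
        have : (2:ℝ)^n ≠ 0 := by positivity
        field_simp
      rw [hA, Finset.mul_sum]
      have hsum : ∑ j ∈ Finset.range m, ((1/2^n : ℝ) * ∑ σ : Fin n → Bool,
            (D j).sup' (hDne j) (fun d => radSum σ d)) ≤ (m:ℝ) * (6 * Real.sqrt R) := by
        calc ∑ j ∈ Finset.range m, ((1/2^n : ℝ) * ∑ σ : Fin n → Bool,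
              (D j).sup' (hDne j) (fun d => radSum σ d))
            ≤ ∑ _j ∈ Finset.range m, 6 * Real.sqrt R :=
              Finset.sum_le_sum fun j _ => hMas j
          _ = (m:ℝ) * (6 * Real.sqrt R) := by
              rw [Finset.sum_const, Finset.card_range, nsmul_eq_mul]
      linarith
    have hfinal : empRad S ≤ (1 / (n:ℝ)) *
        (Real.sqrt n * eps m + (m:ℝ) * (6 * Real.sqrt R)) := by
      calc empRad S ≤ (1 / 2 ^ n : ℝ) * ∑ σ : Fin n → Bool,
            (1 / (n:ℝ)) * (Real.sqrt n * eps m +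
              ∑ j ∈ Finset.range m, (D j).sup' (hDne j) (fun d => radSum σ d)) := hstep
        _ = (1 / (n:ℝ)) * ((1 / 2 ^ n : ℝ) * ∑ σ : Fin n → Bool, (Real.sqrt n * eps m +
              ∑ j ∈ Finset.range m, (D j).sup' (hDne j) (fun d => radSum σ d))) := by
            rw [← Finset.mul_sum]
            ring
        _ ≤ (1 / (n:ℝ)) * (Real.sqrt n * eps m + (m:ℝ) * (6 * Real.sqrt R)) :=
            mul_le_mul_of_nonneg_left hin (by positivity)
    calc empRad S ≤ _ := hfinal
      _ = _ := by ring
  -- numeric endgame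
  have hss : Real.sqrt n * Real.sqrt n = (n:ℝ) := Real.mul_self_sqrt hn'.le
  have hA_eq : (1 / (n:ℝ)) * (Real.sqrt n * eps m) = 1 / 2 ^ m := by
    simp only [heps]
    rw [← mul_div_assoc, hss]
    field_simp
  have hT1 : (1:ℝ) / 2 ^ m ≤ 4 / (n:ℝ) ^ ((3:ℝ)/2) := by
    have hnat : (n^2 : ℕ) < 2 ^ (m+1) := Nat.lt_pow_succ_log_self one_lt_two (n^2)
    have hreal : ((n:ℝ))^2 < 2 ^ (m+1) := by exact_mod_cast hnat
    have h2m : (0:ℝ) < 2 ^ m := by positivity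
    have hstep1 : (1:ℝ)/2^m ≤ 2/(n:ℝ)^2 := by
      rw [div_le_div_iff₀ h2m (by positivity)]
      have h6 : (2:ℝ)^(m+1) = 2^m * 2 := pow_succ 2 m
      nlinarith [hreal, h6]
    have hrpow : (n:ℝ) ^ ((3:ℝ)/2) ≤ (n:ℝ) ^ 2 := by
      have h1 : (n:ℝ) ^ ((3:ℝ)/2) ≤ (n:ℝ) ^ ((2:ℕ):ℝ) :=
        Real.rpow_le_rpow_of_exponent_le (by exact_mod_cast hn) (by norm_num)
      rwa [Real.rpow_natCast] at h1
    have hrpow_pos : (0:ℝ) < (n:ℝ) ^ ((3:ℝ)/2) := Real.rpow_pos_of_pos hn' _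
    have hstep2 : (2:ℝ)/(n:ℝ)^2 ≤ 4/(n:ℝ)^((3:ℝ)/2) := by
      rw [div_le_div_iff₀ (by positivity) hrpow_pos]
      nlinarith [hrpow, hrpow_pos]
    linarith
  have hm3 : (m:ℝ) ≤ 3 * Real.log n := by
    have hne : n^2 ≠ 0 := by positivity
    have hnat : 2 ^ m ≤ n ^ 2 := Nat.pow_log_le_self 2 hne
    have hreal : (2:ℝ)^m ≤ ((n:ℝ))^2 := by exact_mod_cast hnat
    have hlog : (m:ℝ) * Real.log 2 ≤ 2 * Real.log n := by
      have h5 := Real.log_le_log (by positivity) hreal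
      rwa [Real.log_pow, Real.log_pow] at h5
    have hl2 := Real.log_two_gt_d9
    have hln : 0 ≤ Real.log n := Real.log_nonneg (by exact_mod_cast hn)
    nlinarith [hlog, hl2, hln]
  have hT2 : (1/(n:ℝ)) * ((m:ℝ) * (6 * Real.sqrt R)) ≤ (18 / n) * Real.sqrt R * Real.log n := by
    have hsR : 0 ≤ Real.sqrt R := Real.sqrt_nonneg R
    have h1 : (m:ℝ) * (6 * Real.sqrt R) ≤ (3 * Real.log n) * (6 * Real.sqrt R) :=
      mul_le_mul_of_nonneg_right hm3 (by positivity)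
    calc (1/(n:ℝ)) * ((m:ℝ) * (6 * Real.sqrt R))
        ≤ (1/(n:ℝ)) * ((3 * Real.log n) * (6 * Real.sqrt R)) :=
          mul_le_mul_of_nonneg_left h1 (by positivity)
      _ = (18 / n) * Real.sqrt R * Real.log n := by
          field_simp
          ring
  rw [hA_eq] at hemp
  linarith [hemp, hT1, hT2]
end
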